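/- Let m ≥ 1 and let d be an integer with gcd(d, 2^m - 1) = 1. Then for all α, β ∈ F \ {0} with α ≠ β and all i, j ∈ GF(2): (-1)^(i+j) · Σ_{x ∈ F} (-1)^(tr((α+β)x + x^d)) = -2^m + 4·|D_d ∩ H^i(α)| + 4·|D_d ∩ H^j(β)| - 8·|D_d ∩ H^{i,j}(α,β)|. -/
import Mathlib


attribute [local instance] Classical.propDecidable

noncomputable instance (m : ℕ) : Fintype (GaloisField 2 m) := Fintype.ofFinite _

/-- The absolute trace map from `GF(2^m)` to `GF(2)`. -/
noncomputable def tr (m : ℕ) (x : GaloisField 2 m) : ZMod 2 :=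
  Algebra.trace (ZMod 2) (GaloisField 2 m) x

/-- `(-1)^t` as an integer, for `t ∈ GF(2)`. -/
def chi (t : ZMod 2) : ℤ := (-1) ^ t.val

/-- The Walsh coefficient `∑_{x ∈ F} (-1)^(tr(γx + βx^d))` of the power map `x ↦ x^d`. -/
noncomputable def walsh (m d : ℕ) (β γ : GaloisField 2 m) : ℤ :=
  ∑ x : GaloisField 2 m, chi (tr m (γ * x + β * x ^ d))

/-- The power function `x ↦ x^d` on `GF(2^m)` is maximum nonlinear (almost bent). -/
def MaxNonlinear (m d : ℕ) : Prop :=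
  ∀ β : GaloisField 2 m, β ≠ 0 → ∀ γ : GaloisField 2 m,
    walsh m d β γ ∈ ({0, 2 ^ ((m + 1) / 2), -(2 ^ ((m + 1) / 2))} : Set ℤ)

/-- `D_d = {x ∈ F : tr(x^d) = 1}`. -/
noncomputable def Dd (m d : ℕ) : Finset (GaloisField 2 m) :=
  Finset.univ.filter (fun x => tr m (x ^ d) = 1)

/-- `H^i(α) = {x ∈ F : tr(αx) = i}`. -/
noncomputable def Hi (m : ℕ) (α : GaloisField 2 m) (i : ZMod 2) :
    Finset (GaloisField 2 m) :=
  Finset.univ.filter (fun x => tr m (α * x) = i)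

/-- `H^{i,j}(α,β) = {x ∈ F : tr(αx) = i and tr(βx) = j}`. -/
noncomputable def Hij (m : ℕ) (α β : GaloisField 2 m) (i j : ZMod 2) :
    Finset (GaloisField 2 m) :=
  Finset.univ.filter (fun x => tr m (α * x) = i ∧ tr m (β * x) = j)

lemma zmod2_cases : ∀ x : ZMod 2, x = 0 ∨ x = 1 := by decide

lemma chi_succ : ∀ s : ZMod 2, chi (s + 1) = - chi s := by decide

lemma key_identity : ∀ a b t i j : ZMod 2,
    chi (i+j) * chi (a+b+t) + 1 - 4*(if t = 1 ∧ a = i then (1:ℤ) else 0)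
      - 4*(if t = 1 ∧ b = j then (1:ℤ) else 0)
      + 8*(if t = 1 ∧ a = i ∧ b = j then (1:ℤ) else 0)
    = chi (i+j) * chi (a+b) + chi t := by decide

lemma tr_add (m : ℕ) (x y : GaloisField 2 m) : tr m (x + y) = tr m x + tr m y :=
  map_add _ x y

lemma sum_chi_zero (m : ℕ) (γ : GaloisField 2 m) (hγ : γ ≠ 0) :
    ∑ x : GaloisField 2 m, chi (tr m (γ * x)) = 0 := by
  obtain ⟨z, hz⟩ : ∃ z : GaloisField 2 m, tr m z = 1 := by
    have h := Algebra.trace_ne_zero (ZMod 2) (GaloisField 2 m)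
    rw [DFunLike.ne_iff] at h
    obtain ⟨z, hz⟩ := h
    refine ⟨z, ?_⟩
    rcases zmod2_cases (tr m z) with h0 | h1
    · exact absurd h0 hz
    · exact h1
  set c := γ⁻¹ * z with hc
  have hγc : tr m (γ * c) = 1 := by
    rw [hc, ← mul_assoc, mul_inv_cancel₀ hγ, one_mul, hz]
  have h2 : ∀ x : GaloisField 2 m,
      chi (tr m (γ * (x + c))) = - chi (tr m (γ * x)) := by
    intro x
    rw [mul_add, tr_add, hγc, chi_succ]
  have h3 : ∑ x : GaloisField 2 m, chi (tr m (γ * (x + c)))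
      = ∑ x : GaloisField 2 m, chi (tr m (γ * x)) :=
    Equiv.sum_comp (Equiv.addRight c) (fun x => chi (tr m (γ * x)))
  simp_rw [h2] at h3
  rw [Finset.sum_neg_distrib] at h3
  linarith

lemma pow_d_injective (m d : ℕ) (hm2 : 2 ≤ m) (hgcd : Nat.gcd d (2 ^ m - 1) = 1) :
    Function.Injective (fun x : GaloisField 2 m => x ^ d) := by
  have h4 : 4 ≤ 2 ^ m := by
    calc (4 : ℕ) = 2 ^ 2 := rfl
    _ ≤ 2 ^ m := Nat.pow_le_pow_right (by norm_num) hm2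
  have hd : d ≠ 0 := by
    rintro rfl
    rw [Nat.gcd_zero_left] at hgcd
    omega
  have hcard : Nat.card (GaloisField 2 m)ˣ = 2 ^ m - 1 := by
    rw [Nat.card_eq_fintype_card, Fintype.card_units, ← Nat.card_eq_fintype_card,
      GaloisField.card 2 m (by omega)]
  have hcop : (Nat.card (GaloisField 2 m)ˣ).Coprime d := by
    rw [hcard]
    exact Nat.coprime_comm.mp hgcd
  intro x y hxy
  simp only at hxy
  by_cases hx : x = 0
  · subst hx
    rw [zero_pow hd] at hxy
    exact (pow_eq_zero_iff hd).mp hxy.symm |>.symm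
  by_cases hy : y = 0
  · subst hy
    rw [zero_pow hd] at hxy
    exact absurd ((pow_eq_zero_iff hd).mp hxy) hx
  have hu : (Units.mk0 x hx) ^ d = (Units.mk0 y hy) ^ d := by
    ext
    simpa using hxy
  have := (powCoprime hcop).injective (by simpa [powCoprime] using hu)
  simpa using congrArg Units.val this

lemma sum_chi_pow_zero (m d : ℕ) (hm2 : 2 ≤ m) (hgcd : Nat.gcd d (2 ^ m - 1) = 1) :
    ∑ x : GaloisField 2 m, chi (tr m (x ^ d)) = 0 := by
  have hbij : Function.Bijective (fun x : GaloisField 2 m => x ^ d) :=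
    Finite.injective_iff_bijective.mp (pow_d_injective m d hm2 hgcd)
  have := Fintype.sum_bijective _ hbij
    (fun x : GaloisField 2 m => chi (tr m (x ^ d)))
    (fun y : GaloisField 2 m => chi (tr m y)) (fun x => rfl)
  rw [this]
  have h1 := sum_chi_zero m 1 one_ne_zero
  simpa using h1

/-- For `gcd(d, 2^m - 1) = 1`, distinct nonzero `α, β` and `i, j ∈ GF(2)`:
`(-1)^(i+j) · ∑_x (-1)^(tr((α+β)x + x^d)) = -2^m + 4|D_d ∩ H^i(α)| + 4|D_d ∩ H^j(β)|
 - 8|D_d ∩ H^{i,j}(α,β)|`. -/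
theorem stmt8 (m : ℕ) (hm : 1 ≤ m) (d : ℕ) (hgcd : Nat.gcd d (2 ^ m - 1) = 1) :
    ∀ α β : GaloisField 2 m, α ≠ 0 → β ≠ 0 → α ≠ β → ∀ i j : ZMod 2,
      chi (i + j) * (∑ x : GaloisField 2 m, chi (tr m ((α + β) * x + x ^ d))) =
        -(2 ^ m) + 4 * ((Dd m d ∩ Hi m α i).card : ℤ)
          + 4 * ((Dd m d ∩ Hi m β j).card : ℤ)
          - 8 * ((Dd m d ∩ Hij m α β i j).card : ℤ) := by
  intro α β hα hβ hαβ i j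
  have hcardF : (Fintype.card (GaloisField 2 m) : ℤ) = 2 ^ m := by
    rw [← Nat.card_eq_fintype_card, GaloisField.card 2 m (by omega)]
    push_cast
    ring
  -- rule out m = 1
  have hm2 : 2 ≤ m := by
    by_contra hlt
    have hm1 : m = 1 := by omega
    have hne1 : (0 : GaloisField 2 m) ∉ ({α, β} : Finset (GaloisField 2 m)) := by
      simp [Ne.symm hα, Ne.symm hβ]
    have hne2 : α ∉ ({β} : Finset (GaloisField 2 m)) := by simpa using hαβ
    have h3 : ({0, α, β} : Finset (GaloisField 2 m)).card = 3 := by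
      rw [Finset.card_insert_of_notMem hne1, Finset.card_insert_of_notMem hne2,
        Finset.card_singleton]
    have hle := Finset.card_le_univ ({0, α, β} : Finset (GaloisField 2 m))
    have hcn : Fintype.card (GaloisField 2 m) = 2 ^ m := by
      rw [← Nat.card_eq_fintype_card, GaloisField.card 2 m (by omega)]
    rw [hcn, h3] at hle
    subst hm1
    norm_num at hle
  have hαβ0 : α + β ≠ 0 := by
    intro h
    apply hαβ
    have := eq_neg_of_add_eq_zero_left h
    rwa [CharTwo.neg_eq] at this
  -- express cards as sums
  have e1 : ((Dd m d ∩ Hi m α i).card : ℤ)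
      = ∑ x : GaloisField 2 m,
          (if tr m (x ^ d) = 1 ∧ tr m (α * x) = i then (1:ℤ) else 0) := by
    rw [Dd, Hi, ← Finset.filter_and, Finset.card_filter]
    push_cast [apply_ite (fun n : ℕ => (n : ℤ))]
    rfl
  have e2 : ((Dd m d ∩ Hi m β j).card : ℤ)
      = ∑ x : GaloisField 2 m,
          (if tr m (x ^ d) = 1 ∧ tr m (β * x) = j then (1:ℤ) else 0) := by
    rw [Dd, Hi, ← Finset.filter_and, Finset.card_filter]
    push_cast [apply_ite (fun n : ℕ => (n : ℤ))]
    rfl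
  have e3 : ((Dd m d ∩ Hij m α β i j).card : ℤ)
      = ∑ x : GaloisField 2 m,
          (if tr m (x ^ d) = 1 ∧ tr m (α * x) = i ∧ tr m (β * x) = j then (1:ℤ) else 0) := by
    rw [Dd, Hij, ← Finset.filter_and, Finset.card_filter]
    push_cast [apply_ite (fun n : ℕ => (n : ℤ))]
    rfl
  -- the main pointwise identity summed
  have main : ∑ x : GaloisField 2 m,
      (chi (i+j) * chi (tr m ((α + β) * x + x ^ d)) + 1
        - 4*(if tr m (x ^ d) = 1 ∧ tr m (α * x) = i then (1:ℤ) else 0)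
        - 4*(if tr m (x ^ d) = 1 ∧ tr m (β * x) = j then (1:ℤ) else 0)
        + 8*(if tr m (x ^ d) = 1 ∧ tr m (α * x) = i ∧ tr m (β * x) = j then (1:ℤ) else 0))
      = ∑ x : GaloisField 2 m,
          (chi (i+j) * chi (tr m ((α + β) * x)) + chi (tr m (x ^ d))) := by
    apply Finset.sum_congr rfl
    intro x _
    have ht : tr m ((α + β) * x + x ^ d)
        = tr m (α * x) + tr m (β * x) + tr m (x ^ d) := by
      rw [add_mul, tr_add, tr_add]
    have ht2 : tr m ((α + β) * x) = tr m (α * x) + tr m (β * x) := by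
      rw [add_mul, tr_add]
    rw [ht, ht2]
    exact key_identity (tr m (α * x)) (tr m (β * x)) (tr m (x ^ d)) i j
  -- evaluate the RHS of main
  have hrhs : ∑ x : GaloisField 2 m,
      (chi (i+j) * chi (tr m ((α + β) * x)) + chi (tr m (x ^ d))) = 0 := by
    rw [Finset.sum_add_distrib, ← Finset.mul_sum, sum_chi_zero m (α + β) hαβ0,
      sum_chi_pow_zero m d hm2 hgcd]
    ring
  -- split the LHS of main
  have hsplit : ∑ x : GaloisField 2 m,
      (chi (i+j) * chi (tr m ((α + β) * x + x ^ d)) + 1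
        - 4*(if tr m (x ^ d) = 1 ∧ tr m (α * x) = i then (1:ℤ) else 0)
        - 4*(if tr m (x ^ d) = 1 ∧ tr m (β * x) = j then (1:ℤ) else 0)
        + 8*(if tr m (x ^ d) = 1 ∧ tr m (α * x) = i ∧ tr m (β * x) = j then (1:ℤ) else 0))
      = chi (i+j) * (∑ x : GaloisField 2 m, chi (tr m ((α + β) * x + x ^ d)))
        + 2 ^ m
        - 4 * ((Dd m d ∩ Hi m α i).card : ℤ)
        - 4 * ((Dd m d ∩ Hi m β j).card : ℤ)
        + 8 * ((Dd m d ∩ Hij m α β i j).card : ℤ) := by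
    rw [e1, e2, e3, ← hcardF]
    simp only [Finset.sum_add_distrib, Finset.sum_sub_distrib, ← Finset.mul_sum,
      Finset.sum_const, Finset.card_univ, nsmul_eq_mul, mul_one]
  rw [main, hrhs] at hsplit
  linarith
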